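/- Let m, g, ℓ > 0 and θ₀ ∈ (0, π). Let x, p : ℝ → ℝ be differentiable functions satisfying ẋ(t) = p(t)/(m ℓ²) and ṗ(t) = −m g ℓ sin(x(t)) for all t, with initial conditions x(0) = θ₀ and p(0) = 0. Then (x, p) is periodic with period T_p = 4 √(ℓ/g) ∫₀^{π/2} du / √(1 − ω² sin²(u)), where ω = sin(θ₀/2); that is, x(t + T_p) = x(t) and p(t + T_p) = p(t) for all t ∈ ℝ. -/

import Mathlib

open Real MeasureTheory Filter

/-- The pendulum system `ẋ = p/(mℓ²)`, `ṗ = −mgℓ sin x`, with initial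
conditions `x(0) = θ₀ ∈ (0, π)` and `p(0) = 0`, is periodic with period
`T_p = 4√(ℓ/g) ∫₀^{π/2} du/√(1 − ω² sin²u)`, where `ω = sin(θ₀/2)`. -/

lemma sin_lipschitz : LipschitzWith 1 Real.sin := by
  apply lipschitzWith_of_nnnorm_deriv_le Real.differentiable_sin
  intro x
  rw [Real.deriv_sin, ← NNReal.coe_le_coe, coe_nnnorm, Real.norm_eq_abs]
  simpa using Real.abs_cos_le_one x

lemma ode_unique_global {E : Type*} [NormedAddCommGroup E] [NormedSpace ℝ E]
    {K : NNReal} {v : E → E} (hv : LipschitzWith K v)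
    {F G : ℝ → E} (hF : ∀ t, HasDerivAt F (v (F t)) t)
    (hG : ∀ t, HasDerivAt G (v (G t)) t) (h0 : F 0 = G 0) : ∀ t, F t = G t := by
  intro t
  have h0m : (0:ℝ) ∈ Set.Ioo (-(|t|+1)) (|t|+1) := by
    constructor <;> nlinarith [abs_nonneg t]
  have htm : t ∈ Set.Ioo (-(|t|+1)) (|t|+1) := by
    constructor <;> nlinarith [abs_nonneg t, le_abs_self t, neg_abs_le t]
  exact ODE_solution_unique_of_mem_Ioo (v := fun _ z => v z) (s := fun _ => Set.univ)
    (fun _ _ => hv.lipschitzOnWith) h0m (fun s _ => ⟨hF s, trivial⟩)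
    (fun s _ => ⟨hG s, trivial⟩) h0 htm


lemma exists_phi (c ω : ℝ) (hc : 0 < c) (hω0 : 0 ≤ ω) (hω1 : ω < 1) :
    ∃ φ : ℝ → ℝ, φ 0 = π/2 ∧
      (∀ t, HasDerivAt φ (-(c * Real.sqrt (1 - ω^2 * Real.sin (φ t)^2))) t) ∧
      (∀ t, φ (t + (4 * c⁻¹ *
        ∫ u in (0:ℝ)..(π/2), 1 / Real.sqrt (1 - ω^2 * Real.sin u^2))) = φ t - 2*π) := by
  set f₀ : ℝ → ℝ := fun s => Real.sqrt (1 - ω^2 * Real.sin s^2) with hf₀def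
  have hmn : ∀ s : ℝ, 0 ≤ ω^2 * Real.sin s^2 :=
    fun s => mul_nonneg (sq_nonneg _) (sq_nonneg _)
  have harg : ∀ s : ℝ, 0 < 1 - ω^2 * Real.sin s^2 := by
    intro s
    nlinarith [Real.sin_sq_le_one s, hmn s]
  have hf₀pos : ∀ s, 0 < f₀ s := fun s => Real.sqrt_pos.2 (harg s)
  have hf₀le : ∀ s, f₀ s ≤ 1 := by
    intro s
    rw [hf₀def]
    exact Real.sqrt_le_one.2 (by linarith [hmn s])
  have hf₀cont : Continuous f₀ := by
    apply Real.continuous_sqrt.comp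
    continuity
  set h : ℝ → ℝ := fun s => 1 / (c * f₀ s) with hhdef
  have hh_pos : ∀ s, 0 < h s := fun s => one_div_pos.2 (mul_pos hc (hf₀pos s))
  have hh_lb : ∀ s, 1/c ≤ h s := by
    intro s
    apply one_div_le_one_div_of_le (mul_pos hc (hf₀pos s))
    nlinarith [hf₀le s]
  have hh_cont : Continuous h := by
    apply Continuous.div continuous_const (continuous_const.mul hf₀cont)
    exact fun s => ne_of_gt (mul_pos hc (hf₀pos s))
  have hInt : ∀ a b : ℝ, IntervalIntegrable h volume a b :=
    fun a b => hh_cont.intervalIntegrable a b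
  set A : ℝ → ℝ := fun y => ∫ s in (π/2)..y, h s with hAdef
  have hA_deriv : ∀ y, HasDerivAt A (h y) y := by
    intro y
    exact intervalIntegral.integral_hasDerivAt_right (hInt _ _)
      (hh_cont.stronglyMeasurableAtFilter _ _) hh_cont.continuousAt
  have hA_cont : Continuous A := by
    rw [continuous_iff_continuousAt]; exact fun y => (hA_deriv y).continuousAt
  have hA_mono : StrictMono A := by
    apply strictMono_of_deriv_pos
    intro y; rw [(hA_deriv y).deriv]; exact hh_pos y
  have hA_sub : ∀ y z : ℝ, A y - A z = ∫ s in z..y, h s := by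
    intro y z
    rw [hAdef]
    exact intervalIntegral.integral_interval_sub_left (hInt _ _) (hInt _ _)
  have hA_lb : ∀ y z : ℝ, z ≤ y → (y - z)/c ≤ A y - A z := by
    intro y z hzy
    rw [hA_sub]
    have : ∫ _ in z..y, (1/c : ℝ) ≤ ∫ s in z..y, h s := by
      apply intervalIntegral.integral_mono_on hzy (intervalIntegrable_const) (hInt _ _)
      intro s _; exact hh_lb s
    simpa [intervalIntegral.integral_const, smul_eq_mul, div_eq_mul_inv, mul_comm]
      using this
  have hA_top : Tendsto A atTop atTop := by
    have hlin : Tendsto (fun y : ℝ => A 0 + y/c) atTop atTop :=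
      tendsto_atTop_add_const_left _ _ (Tendsto.atTop_div_const hc tendsto_id)
    apply tendsto_atTop_mono' _ _ hlin
    filter_upwards [eventually_ge_atTop (0:ℝ)] with y hy
    have := hA_lb y 0 hy
    simp only [sub_zero] at this
    linarith
  have hA_bot : Tendsto A atBot atBot := by
    have hlin : Tendsto (fun y : ℝ => A 0 + y/c) atBot atBot :=
      tendsto_atBot_add_const_left _ _ (Tendsto.atBot_div_const hc tendsto_id)
    apply tendsto_atBot_mono' _ _ hlin
    filter_upwards [eventually_le_atBot (0:ℝ)] with y hy
    have := hA_lb 0 y hy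
    have h2 : (0 - y)/c = -(y/c) := by ring
    rw [h2] at this
    linarith
  have hA_surj : Function.Surjective A := hA_cont.surjective hA_top hA_bot
  set e := StrictMono.orderIsoOfSurjective A hA_mono hA_surj with hedef
  set φ : ℝ → ℝ := fun t => e.symm (-t) with hφdef
  have hAφ : ∀ t, A (φ t) = -t := fun t =>
    StrictMono.orderIsoOfSurjective_self_symm_apply A hA_mono hA_surj (-t)
  have hesymm_cont : Continuous (e.symm : ℝ → ℝ) := OrderIso.continuous e.symm
  have hφ0 : φ 0 = π/2 := by
    have hA0 : A (π/2) = 0 := by rw [hAdef]; exact intervalIntegral.integral_same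
    have : e (π/2) = 0 := hA0
    rw [hφdef]
    simp only [neg_zero]
    rw [← this, OrderIso.symm_apply_apply]
  have hφ_deriv : ∀ t, HasDerivAt φ (-(c * f₀ (φ t))) t := by
    intro t
    have h1 : HasDerivAt (e.symm : ℝ → ℝ) ((h (φ t))⁻¹) (-t) := by
      apply HasDerivAt.of_local_left_inverse (hesymm_cont.continuousAt)
        (f := A) ?_ (ne_of_gt (hh_pos _)) ?_
      · exact hA_deriv _
      · filter_upwards with s
        exact StrictMono.orderIsoOfSurjective_self_symm_apply A hA_mono hA_surj s
    have h2 : HasDerivAt (fun t : ℝ => -t) (-1 : ℝ) t := (hasDerivAt_id t).neg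
    have h3 := HasDerivAt.comp t h1 h2
    have h4 : (h (φ t))⁻¹ * (-1) = -(c * f₀ (φ t)) := by
      rw [hhdef]
      simp only [one_div, inv_inv]
      ring
    rw [hφdef]
    exact h3.congr_deriv h4
  -- periodicity of h
  have hh_per : Function.Periodic h π := by
    intro s
    simp only [hhdef, hf₀def, Real.sin_add_pi, neg_sq]
  have hh_even : ∀ s, h (-s) = h s := by
    intro s
    simp only [hhdef, hf₀def, Real.sin_neg, neg_sq]
  set Tp := 4 * c⁻¹ * ∫ u in (0:ℝ)..(π/2), 1 / Real.sqrt (1 - ω^2 * Real.sin u^2) with hTpdef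
  have hTp4 : Tp = 4 * ∫ u in (0:ℝ)..(π/2), h u := by
    rw [hTpdef]
    have : ∀ u : ℝ, h u = c⁻¹ * (1 / Real.sqrt (1 - ω^2 * Real.sin u^2)) := by
      intro u
      rw [hhdef, hf₀def]
      field_simp
    simp only [this]
    rw [intervalIntegral.integral_const_mul]
    ring
  have hhalf : ∫ s in (-(π/2))..(π/2), h s = 2 * ∫ u in (0:ℝ)..(π/2), h u := by
    have hsplit : ∫ s in (-(π/2))..(π/2), h s =
        (∫ s in (-(π/2))..(0:ℝ), h s) + ∫ s in (0:ℝ)..(π/2), h s :=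
      (intervalIntegral.integral_add_adjacent_intervals (hInt _ _) (hInt _ _)).symm
    have heven : ∫ s in (-(π/2))..(0:ℝ), h s = ∫ s in (0:ℝ)..(π/2), h s := by
      have := intervalIntegral.integral_comp_neg (a := (0:ℝ)) (b := π/2) (fun s => h s)
      simp only [hh_even, neg_zero] at this
      rw [← this]
    rw [hsplit, heven]; ring
  have hA_shift : ∀ y : ℝ, A (y - 2*π) = A y - Tp := by
    intro y
    have h1 : A y - A (y - 2*π) = ∫ s in (y-2*π)..y, h s := hA_sub y (y - 2*π)
    have h2 : ∫ s in (y-2*π)..y, h s =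
        (∫ s in (y-2*π)..(y-π), h s) + ∫ s in (y-π)..y, h s :=
      (intervalIntegral.integral_add_adjacent_intervals (hInt _ _) (hInt _ _)).symm
    have h3 : ∫ s in (y-2*π)..(y-π), h s = ∫ s in (-(π/2))..(π/2), h s := by
      have := hh_per.intervalIntegral_add_eq (y - 2*π) (-(π/2))
      have e1 : y - 2*π + π = y - π := by ring
      have e2 : -(π/2) + π = π/2 := by ring
      rw [e1, e2] at this
      exact this
    have h4 : ∫ s in (y-π)..y, h s = ∫ s in (-(π/2))..(π/2), h s := by
      have := hh_per.intervalIntegral_add_eq (y - π) (-(π/2))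
      have e1 : y - π + π = y := by ring
      have e2 : -(π/2) + π = π/2 := by ring
      rw [e1, e2] at this
      exact this
    have : A y - A (y - 2*π) = Tp := by
      rw [h1, h2, h3, h4, hhalf, hTp4]; ring
    linarith
  refine ⟨φ, hφ0, hφ_deriv, ?_⟩
  intro t
  have key : A (φ t - 2*π) = -(t + Tp) := by
    rw [hA_shift, hAφ]; ring
  have : e (φ t - 2*π) = -(t + Tp) := key
  calc φ (t + Tp) = e.symm (-(t + Tp)) := rfl
  _ = e.symm (e (φ t - 2*π)) := by rw [this]
  _ = φ t - 2*π := e.symm_apply_apply _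

theorem pendulum_periodic
    (m g ℓ : ℝ) (hm : 0 < m) (hg : 0 < g) (hℓ : 0 < ℓ)
    (θ₀ : ℝ) (hθ₀ : θ₀ ∈ Set.Ioo 0 π)
    (x p : ℝ → ℝ) (hx : Differentiable ℝ x) (hp : Differentiable ℝ p)
    (hxeq : ∀ t : ℝ, deriv x t = p t / (m * ℓ ^ 2))
    (hpeq : ∀ t : ℝ, deriv p t = -(m * g * ℓ * sin (x t)))
    (hx0 : x 0 = θ₀) (hp0 : p 0 = 0)
    (Tp : ℝ)
    (hTp : Tp = 4 * Real.sqrt (ℓ / g)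
      * ∫ u in (0 : ℝ)..(π / 2), 1 / Real.sqrt (1 - sin (θ₀ / 2) ^ 2 * sin u ^ 2)) :
    ∀ t : ℝ, x (t + Tp) = x t ∧ p (t + Tp) = p t := by
  obtain ⟨hθ0, hθπ⟩ := hθ₀
  set ω : ℝ := sin (θ₀ / 2) with hωdef
  have hω0 : 0 < ω := sin_pos_of_pos_of_lt_pi (by linarith) (by linarith [pi_pos])
  have hcosθ : 0 < Real.cos (θ₀/2) :=
    Real.cos_pos_of_mem_Ioo ⟨by linarith [pi_pos], by linarith⟩
  have hω1 : ω < 1 := by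
    nlinarith [Real.sin_sq_add_cos_sq (θ₀/2)]
  set c : ℝ := Real.sqrt (g/ℓ) with hcdef
  have hgl : 0 < g/ℓ := div_pos hg hℓ
  have hc : 0 < c := Real.sqrt_pos.2 hgl
  have hc2 : c^2 = g/ℓ := Real.sq_sqrt (le_of_lt hgl)
  obtain ⟨φ, hφ0, hφ', hφper⟩ := exists_phi c ω hc (le_of_lt hω0) hω1
  have hsqrtinv : Real.sqrt (ℓ/g) = c⁻¹ := by
    rw [hcdef, ← Real.sqrt_inv, inv_div]
  have hTp' : Tp = 4 * c⁻¹ *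
      ∫ u in (0:ℝ)..(π/2), 1 / Real.sqrt (1 - ω^2 * Real.sin u^2) := by
    rw [hTp, hsqrtinv]
  -- abbreviations
  set F₀ : ℝ → ℝ := fun s => Real.sqrt (1 - ω^2 * Real.sin (φ s)^2) with hF₀def
  have hF₀pos : ∀ s, 0 < F₀ s := by
    intro s
    apply Real.sqrt_pos.2
    nlinarith [Real.sin_sq_le_one (φ s), sq_nonneg (Real.sin (φ s)),
      mul_nonneg (sq_nonneg ω) (sq_nonneg (Real.sin (φ s)))]
  have hzabs : ∀ s : ℝ, |ω * Real.sin (φ s)| ≤ ω := by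
    intro s
    rw [abs_mul, abs_of_pos hω0]
    nlinarith [Real.abs_sin_le_one (φ s), abs_nonneg (Real.sin (φ s))]
  have hzlt : ∀ s : ℝ, |ω * Real.sin (φ s)| < 1 := fun s => lt_of_le_of_lt (hzabs s) hω1
  have hzne1 : ∀ s : ℝ, ω * Real.sin (φ s) ≠ -1 := by
    intro s h
    have := hzlt s; rw [h] at this; simp at this
  have hzne2 : ∀ s : ℝ, ω * Real.sin (φ s) ≠ 1 := by
    intro s h
    have := hzlt s; rw [h] at this; simp at this
  have hsqF : ∀ s : ℝ, Real.sqrt (1 - (ω * Real.sin (φ s))^2) = F₀ s := by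
    intro s; rw [hF₀def, mul_pow]
  -- candidate solution
  set xt : ℝ → ℝ := fun s => 2 * Real.arcsin (ω * Real.sin (φ s)) with hxtdef
  set pt : ℝ → ℝ := fun s => -(2 * ω * c * (m * ℓ^2)) * Real.cos (φ s) with hptdef
  have hxt' : ∀ s, HasDerivAt xt (pt s / (m * ℓ^2)) s := by
    intro s
    have hz' : HasDerivAt (fun t => ω * Real.sin (φ t))
        (ω * (Real.cos (φ s) * (-(c * F₀ s)))) s := ((hφ' s).sin).const_mul ω
    have harc : HasDerivAt Real.arcsin (1 / Real.sqrt (1 - (ω * Real.sin (φ s))^2))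
        (ω * Real.sin (φ s)) := Real.hasDerivAt_arcsin (hzne1 s) (hzne2 s)
    have hcomp := (harc.comp s hz').const_mul (2:ℝ)
    refine hcomp.congr_deriv (Eq.symm ?_)
    rw [hsqF s]
    have hF := hF₀pos s
    have hml : m * ℓ^2 > 0 := by positivity
    rw [hptdef]
    field_simp
  have hpt' : ∀ s, HasDerivAt pt (-(m * g * ℓ * Real.sin (xt s))) s := by
    intro s
    have hcos' : HasDerivAt (fun t => Real.cos (φ t))
        (-Real.sin (φ s) * (-(c * F₀ s))) s := (hφ' s).cos
    have hcomp := hcos'.const_mul (-(2 * ω * c * (m * ℓ^2)))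
    refine hcomp.congr_deriv (Eq.symm ?_)
    have hsinxt : Real.sin (xt s) = 2 * (ω * Real.sin (φ s)) * F₀ s := by
      rw [hxtdef]
      simp only
      rw [Real.sin_two_mul, Real.sin_arcsin (by linarith [abs_le.1 (hzabs s), hω1])
        (by linarith [abs_le.1 (hzabs s), hω1]), Real.cos_arcsin, hsqF s]
    rw [hsinxt]
    have hc2' : c^2 * ℓ = g := by rw [hc2]; field_simp
    linear_combination (2 * m * ℓ * ω * Real.sin (φ s) * F₀ s) * hc2'
  -- the vector field and its Lipschitz property
  set v : ℝ × ℝ → ℝ × ℝ := fun z => (z.2 / (m * ℓ^2), -(m * g * ℓ * Real.sin z.1)) with hvdef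
  have hml2 : (0:ℝ) < m * ℓ^2 := by positivity
  have hmgl : (0:ℝ) < m * g * ℓ := by positivity
  set Lr : ℝ := max (1/(m * ℓ^2)) (m * g * ℓ) with hLrdef
  have hLr0 : 0 ≤ Lr := le_trans (by positivity) (le_max_left _ _)
  have hvlip : LipschitzWith (Real.toNNReal Lr) v := by
    apply LipschitzWith.of_dist_le_mul
    intro a b
    rw [Real.coe_toNNReal _ hLr0]
    have hd : dist (v a) (v b) = max (dist (a.2 / (m * ℓ^2)) (b.2 / (m * ℓ^2)))
        (dist (-(m * g * ℓ * Real.sin a.1)) (-(m * g * ℓ * Real.sin b.1))) := Prod.dist_eq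
    have hfst : dist a.1 b.1 ≤ dist a b := by
      rw [Prod.dist_eq]; exact le_max_left _ _
    have hsnd : dist a.2 b.2 ≤ dist a b := by
      rw [Prod.dist_eq]; exact le_max_right _ _
    rw [hd]
    apply max_le
    · have : dist (a.2 / (m * ℓ^2)) (b.2 / (m * ℓ^2)) = (1/(m * ℓ^2)) * dist a.2 b.2 := by
        rw [Real.dist_eq, Real.dist_eq, div_sub_div_same, abs_div,
          abs_of_pos hml2]
        ring
      rw [this]
      calc (1/(m * ℓ^2)) * dist a.2 b.2 ≤ (1/(m * ℓ^2)) * dist a b := by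
            apply mul_le_mul_of_nonneg_left hsnd (by positivity)
      _ ≤ Lr * dist a b := by
            apply mul_le_mul_of_nonneg_right (le_max_left _ _) dist_nonneg
    · have hsinlip : dist (Real.sin a.1) (Real.sin b.1) ≤ dist a.1 b.1 := by
        have := sin_lipschitz.dist_le_mul a.1 b.1
        simpa using this
      have : dist (-(m * g * ℓ * Real.sin a.1)) (-(m * g * ℓ * Real.sin b.1))
          = (m * g * ℓ) * dist (Real.sin a.1) (Real.sin b.1) := by
        have he : -(m * g * ℓ * Real.sin a.1) - (-(m * g * ℓ * Real.sin b.1))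
            = (m * g * ℓ) * (Real.sin b.1 - Real.sin a.1) := by ring
        rw [Real.dist_eq, Real.dist_eq, he, abs_mul, abs_of_pos hmgl, abs_sub_comm]
      rw [this]
      calc (m * g * ℓ) * dist (Real.sin a.1) (Real.sin b.1)
          ≤ (m * g * ℓ) * dist a b := by
            apply mul_le_mul_of_nonneg_left (le_trans hsinlip hfst) (le_of_lt hmgl)
      _ ≤ Lr * dist a b := by
            apply mul_le_mul_of_nonneg_right (le_max_right _ _) dist_nonneg
  -- the two solutions
  set F : ℝ → ℝ × ℝ := fun s => (x s, p s) with hFdef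
  set G : ℝ → ℝ × ℝ := fun s => (xt s, pt s) with hGdef
  have hF' : ∀ s, HasDerivAt F (v (F s)) s := by
    intro s
    have hx' : HasDerivAt x (p s / (m * ℓ^2)) s := by
      have := (hx s).hasDerivAt
      rwa [hxeq s] at this
    have hp' : HasDerivAt p (-(m * g * ℓ * Real.sin (x s))) s := by
      have := (hp s).hasDerivAt
      rwa [hpeq s] at this
    exact hx'.prodMk hp'
  have hG' : ∀ s, HasDerivAt G (v (G s)) s := fun s => (hxt' s).prodMk (hpt' s)
  have hxt0 : xt 0 = θ₀ := by
    rw [hxtdef]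
    simp only [hφ0, Real.sin_pi_div_two, mul_one, hωdef]
    rw [Real.arcsin_sin (by linarith [pi_pos]) (by linarith)]
    ring
  have hpt0 : pt 0 = 0 := by
    rw [hptdef]
    simp [hφ0]
  have h00 : F 0 = G 0 := by
    rw [hFdef, hGdef]
    simp only
    rw [hx0, hp0, hxt0, hpt0]
  have huniq := ode_unique_global hvlip hF' hG' h00
  -- periodicity of the candidate
  have hxtper : ∀ s, xt (s + Tp) = xt s := by
    intro s
    rw [hxtdef]
    simp only
    rw [hTp', hφper s, Real.sin_sub_two_pi]
  have hptper : ∀ s, pt (s + Tp) = pt s := by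
    intro s
    rw [hptdef]
    simp only
    rw [hTp', hφper s, Real.cos_sub_two_pi]
  intro t
  have h1 := huniq t
  have h2 := huniq (t + Tp)
  rw [hFdef, hGdef] at h1 h2
  simp only [Prod.mk.injEq] at h1 h2
  constructor
  · rw [h2.1, h1.1, hxtper]
  · rw [h2.2, h1.2, hptper]
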